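/- Let k_on, k_off : [0,∞) → ℝ be C¹, let k_c, k_f : [0,∞)×[0,∞) → ℝ be continuous and symmetric, and set T(V,x) = V·k_on(x) − k_off(x). Let T₀ > 0, V ∈ C¹([0,T₀]), and u ∈ C¹([0,∞)×[0,T₀]) such that there exists M > 0 with u(x,t) = 0 for all x ≥ M and all t ∈ [0,T₀]. Assume that for all t ∈ (0,T₀): V'(t) = −∫_0^∞ T(V(t),x) u(x,t) dx, and for all x > 0, ∂_t u(x,t) = −∂_x( T(V(t),x) u(x,t) ) + Q_c(u(·,t))(x) − Q_f(u(·,t))(x). Then the total mass P(t) = V(t) + ∫_0^∞ x u(x,t) dx is constant on [0,T₀]. -/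

import Mathlib

open MeasureTheory

/-- The coagulation operator:
`Q_c(u)(x) = (1/2)∫_0^x k_c(y, x−y) u(y) u(x−y) dy − u(x) ∫_0^∞ k_c(x,y) u(y) dy`. -/
noncomputable def Qc (kc : ℝ → ℝ → ℝ) (u : ℝ → ℝ) (x : ℝ) : ℝ :=
  (1 / 2) * (∫ y in (0:ℝ)..x, kc y (x - y) * u y * u (x - y))
    - u x * ∫ y in Set.Ioi (0:ℝ), kc x y * u y

/-- The fragmentation operator:
`Q_f(u)(x) = (1/2) u(x) ∫_0^x k_f(y, x−y) dy − ∫_0^∞ k_f(x,y) u(x+y) dy`. -/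
noncomputable def Qf (kf : ℝ → ℝ → ℝ) (u : ℝ → ℝ) (x : ℝ) : ℝ :=
  (1 / 2) * u x * (∫ y in (0:ℝ)..x, kf y (x - y))
    - ∫ y in Set.Ioi (0:ℝ), kf x y * u (x + y)

/-- The polymerization transport rate `T(V,x) = V·k_on(x) − k_off(x)`. -/
noncomputable def Trate (kon koff : ℝ → ℝ) (V x : ℝ) : ℝ := V * kon x - koff x

open Set


lemma tail_int {f : ℝ → ℝ} {b : ℝ} (hb : 0 ≤ b)
    (h0 : ∀ x > b, f x = 0) (hi : IntegrableOn f (Set.Ioc 0 b)) :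
    ∫ x in Set.Ioi (0:ℝ), f x = ∫ x in Set.Ioc (0:ℝ) b, f x := by
  have hzero : IntegrableOn f (Set.Ioi b) :=
    (integrableOn_zero (ε' := ℝ) (μ := volume)).congr_fun (fun x hx => (h0 x hx).symm) measurableSet_Ioi
  rw [← Ioc_union_Ioi_eq_Ioi hb,
    setIntegral_union (Ioc_disjoint_Ioi le_rfl) measurableSet_Ioi hi hzero]
  have : ∫ x in Set.Ioi b, f x = 0 := by
    rw [setIntegral_congr_fun measurableSet_Ioi (fun x hx => h0 x hx)]
    simp
  rw [this, add_zero]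

lemma tri_swap {A : ℝ} (hA : 0 < A) {f : ℝ → ℝ → ℝ}
    (hf : ContinuousOn (fun p : ℝ × ℝ => f p.1 p.2)
      {p : ℝ × ℝ | 0 ≤ p.2 ∧ p.2 ≤ p.1 ∧ p.1 ≤ A}) :
    IntegrableOn (fun x => ∫ y in (0:ℝ)..x, f x y) (Set.Ioc 0 A) ∧
      IntegrableOn (fun y => ∫ x in y..A, f x y) (Set.Ioc 0 A) ∧
      (∫ x in Set.Ioc (0:ℝ) A, ∫ y in (0:ℝ)..x, f x y)
        = ∫ y in Set.Ioc (0:ℝ) A, ∫ x in y..A, f x y := by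
  set T : Set (ℝ × ℝ) := {p : ℝ × ℝ | 0 ≤ p.2 ∧ p.2 ≤ p.1 ∧ p.1 ≤ A} with hT
  have hTsub : T ⊆ Icc 0 A ×ˢ Icc 0 A := by
    rintro ⟨x, y⟩ ⟨h1, h2, h3⟩
    exact ⟨⟨h1.trans h2, h3⟩, ⟨h1, h2.trans h3⟩⟩
  have hTclosed : IsClosed T := by
    have h1 : IsClosed {p : ℝ × ℝ | 0 ≤ p.2} := isClosed_le continuous_const continuous_snd
    have h2 : IsClosed {p : ℝ × ℝ | p.2 ≤ p.1} := isClosed_le continuous_snd continuous_fst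
    have h3 : IsClosed {p : ℝ × ℝ | p.1 ≤ A} := isClosed_le continuous_fst continuous_const
    have : T = ({p : ℝ × ℝ | 0 ≤ p.2} ∩ ({p : ℝ × ℝ | p.2 ≤ p.1} ∩ {p : ℝ × ℝ | p.1 ≤ A})) := by
      ext p; simp only [hT, mem_setOf_eq, mem_inter_iff, and_assoc]
    rw [this]; exact h1.inter (h2.inter h3)
  have hTcomp : IsCompact T :=
    (isCompact_Icc.prod isCompact_Icc).of_isClosed_subset hTclosed hTsub
  obtain ⟨C, hC⟩ := hTcomp.exists_bound_of_continuousOn hf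
  have hC0 : 0 ≤ C := le_trans (norm_nonneg _) (hC (0, 0) ⟨le_refl 0, le_refl 0, hA.le⟩)
  set μ := volume.restrict (Set.Ioc (0:ℝ) A) with hμ
  haveI : IsFiniteMeasure μ := ⟨by rw [hμ, Measure.restrict_apply_univ]; exact measure_Ioc_lt_top⟩
  set H : Set (ℝ × ℝ) := {p : ℝ × ℝ | p.2 ≤ p.1} with hH
  have hHm : MeasurableSet H := measurableSet_le measurable_snd measurable_fst
  set g : ℝ × ℝ → ℝ := H.indicator (fun p => f p.1 p.2) with hg
  have hsub2 : H ∩ (Set.Ioc (0:ℝ) A ×ˢ Set.Ioc (0:ℝ) A) ⊆ T := by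
    rintro ⟨x, y⟩ ⟨h1, h2⟩
    exact ⟨h2.2.1.le, h1, h2.1.2⟩
  have hmeas2 : MeasurableSet (H ∩ (Set.Ioc (0:ℝ) A ×ˢ Set.Ioc (0:ℝ) A)) :=
    hHm.inter (measurableSet_Ioc.prod measurableSet_Ioc)
  have hg_meas : AEStronglyMeasurable g (μ.prod μ) := by
    rw [hμ, Measure.prod_restrict]
    refine (aestronglyMeasurable_indicator_iff hHm).2 ?_
    rw [Measure.restrict_restrict hHm]
    exact (hf.mono hsub2).aestronglyMeasurable hmeas2
  have hg_int : Integrable g (μ.prod μ) := by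
    refine Integrable.mono' (integrable_const C) hg_meas ?_
    rw [hμ, Measure.prod_restrict]
    refine (ae_restrict_iff' (measurableSet_Ioc.prod measurableSet_Ioc)).2 (ae_of_all _ ?_)
    intro p hp
    by_cases hpH : p ∈ H
    · rw [hg, indicator_of_mem hpH]
      exact hC p (hsub2 ⟨hpH, hp⟩)
    · rw [hg, indicator_of_notMem hpH]; simpa using hC0
  have key1 : ∀ x ∈ Set.Ioc (0:ℝ) A, (∫ y, g (x, y) ∂μ) = ∫ y in (0:ℝ)..x, f x y := by
    intro x hx
    have hfx : ContinuousOn (fun y => f x y) (Icc 0 x) := by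
      refine hf.comp ((continuous_const.prodMk continuous_id).continuousOn) ?_
      intro y hy; exact ⟨hy.1, hy.2, hx.2⟩
    have hint1 : IntegrableOn (fun y => g (x, y)) (Set.Ioc 0 x) := by
      refine (hfx.integrableOn_Icc.mono_set Ioc_subset_Icc_self).congr_fun ?_ measurableSet_Ioc
      intro y hy
      show f x y = g (x, y)
      have hmem : (x, y) ∈ H := hy.2
      rw [hg]; exact (indicator_of_mem hmem (fun p : ℝ × ℝ => f p.1 p.2)).symm
    have hint2 : IntegrableOn (fun y => g (x, y)) (Set.Ioc x A) := by
      refine (integrableOn_zero (ε' := ℝ) (μ := volume)).congr_fun ?_ measurableSet_Ioc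
      intro y hy
      show (0:ℝ) = g (x, y)
      have hmem : (x, y) ∉ H := not_le.2 hy.1
      rw [hg]; exact (indicator_of_notMem hmem (fun p : ℝ × ℝ => f p.1 p.2)).symm
    have hsplit : Set.Ioc (0:ℝ) A = Set.Ioc 0 x ∪ Set.Ioc x A :=
      (Ioc_union_Ioc_eq_Ioc hx.1.le hx.2).symm
    rw [hμ, show (∫ y, g (x, y) ∂(volume.restrict (Set.Ioc (0:ℝ) A)))
        = ∫ y in Set.Ioc (0:ℝ) A, g (x, y) from rfl, hsplit,
      setIntegral_union (Ioc_disjoint_Ioc.2 (by simp)) measurableSet_Ioc hint1 hint2]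
    have e1 : ∫ y in Set.Ioc (0:ℝ) x, g (x, y) = ∫ y in (0:ℝ)..x, f x y := by
      rw [intervalIntegral.integral_of_le hx.1.le]
      refine setIntegral_congr_fun measurableSet_Ioc ?_
      intro y hy
      show g (x, y) = f x y
      have hmem : (x, y) ∈ H := hy.2
      rw [hg]; exact indicator_of_mem hmem (fun p : ℝ × ℝ => f p.1 p.2)
    have e2 : ∫ y in Set.Ioc x A, g (x, y) = 0 := by
      rw [setIntegral_congr_fun measurableSet_Ioc (g := fun _ => (0:ℝ))]
      · simp
      · intro y hy
        show g (x, y) = (0:ℝ)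
        have hmem : (x, y) ∉ H := not_le.2 hy.1
        rw [hg]; exact indicator_of_notMem hmem (fun p : ℝ × ℝ => f p.1 p.2)
    rw [e1, e2, add_zero]
  have key2 : ∀ y ∈ Set.Ioc (0:ℝ) A, (∫ x, g (x, y) ∂μ) = ∫ x in y..A, f x y := by
    intro y hy
    have hfy : ContinuousOn (fun x => f x y) (Icc y A) := by
      refine hf.comp ((continuous_id.prodMk continuous_const).continuousOn) ?_
      intro x hx; exact ⟨hy.1.le, hx.1, hx.2⟩
    have hint2 : IntegrableOn (fun x => g (x, y)) (Set.Ioc y A) := by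
      refine (hfy.integrableOn_Icc.mono_set Ioc_subset_Icc_self).congr_fun ?_ measurableSet_Ioc
      intro x hx
      show f x y = g (x, y)
      have hmem : (x, y) ∈ H := hx.1.le
      rw [hg]; exact (indicator_of_mem hmem (fun p : ℝ × ℝ => f p.1 p.2)).symm
    have hint1 : IntegrableOn (fun x => g (x, y)) (Set.Ioc 0 y) := by
      show IntegrableOn (fun x => g (x, y)) (Set.Ioc 0 y) volume
      rw [integrableOn_Ioc_iff_integrableOn_Ioo]
      refine (integrableOn_zero (ε' := ℝ) (μ := volume)).congr_fun ?_ measurableSet_Ioo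
      intro x hx
      show (0:ℝ) = g (x, y)
      have hmem : (x, y) ∉ H := not_le.2 hx.2
      rw [hg]; exact (indicator_of_notMem hmem (fun p : ℝ × ℝ => f p.1 p.2)).symm
    have hsplit : Set.Ioc (0:ℝ) A = Set.Ioc 0 y ∪ Set.Ioc y A :=
      (Ioc_union_Ioc_eq_Ioc hy.1.le hy.2).symm
    rw [hμ, show (∫ x, g (x, y) ∂(volume.restrict (Set.Ioc (0:ℝ) A)))
        = ∫ x in Set.Ioc (0:ℝ) A, g (x, y) from rfl, hsplit,
      setIntegral_union (Ioc_disjoint_Ioc.2 (by simp)) measurableSet_Ioc hint1 hint2]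
    have e1 : ∫ x in Set.Ioc (0:ℝ) y, g (x, y) = 0 := by
      rw [integral_Ioc_eq_integral_Ioo,
        setIntegral_congr_fun measurableSet_Ioo (g := fun _ => (0:ℝ))]
      · simp
      · intro x hx
        show g (x, y) = (0:ℝ)
        have hmem : (x, y) ∉ H := not_le.2 hx.2
        rw [hg]; exact indicator_of_notMem hmem (fun p : ℝ × ℝ => f p.1 p.2)
    have e2 : ∫ x in Set.Ioc y A, g (x, y) = ∫ x in y..A, f x y := by
      rw [intervalIntegral.integral_of_le hy.2]
      refine setIntegral_congr_fun measurableSet_Ioc ?_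
      intro x hx
      show g (x, y) = f x y
      have hmem : (x, y) ∈ H := hx.1.le
      rw [hg]; exact indicator_of_mem hmem (fun p : ℝ × ℝ => f p.1 p.2)
    rw [e1, e2, zero_add]
  have huncurry : Function.uncurry (fun x y => g (x, y)) = g := by
    funext p; simp [Function.uncurry]
  refine ⟨?_, ?_, ?_⟩
  · refine (hg_int.integral_prod_left).congr ?_
    exact (ae_restrict_iff' measurableSet_Ioc).2 (ae_of_all _ key1)
  · have : Integrable (g ∘ Prod.swap) (μ.prod μ) := hg_int.swap
    refine (this.integral_prod_left).congr ?_
    refine (ae_restrict_iff' measurableSet_Ioc).2 (ae_of_all _ ?_)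
    intro y hy
    exact key2 y hy
  · calc (∫ x in Set.Ioc (0:ℝ) A, ∫ y in (0:ℝ)..x, f x y)
        = ∫ x, (∫ y, g (x, y) ∂μ) ∂μ :=
          (setIntegral_congr_fun measurableSet_Ioc fun x hx => (key1 x hx).symm)
      _ = ∫ y, (∫ x, g (x, y) ∂μ) ∂μ := by
          rw [integral_integral_swap]
          rw [huncurry]; exact hg_int
      _ = ∫ y in Set.Ioc (0:ℝ) A, ∫ x in y..A, f x y :=
          setIntegral_congr_fun measurableSet_Ioc key2


lemma transport_part {kon koff : ℝ → ℝ} {Vt M : ℝ} {c : ℝ → ℝ} (hM : 0 < M)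
    (hkon : ContDiffOn ℝ 1 kon (Set.Ici 0)) (hkoff : ContDiffOn ℝ 1 koff (Set.Ici 0))
    (hc : ContDiffOn ℝ 1 c (Set.Ici 0)) (hcsupp : ∀ x ≥ M, c x = 0) :
    IntegrableOn (fun x => x * deriv (fun y => (Vt * kon y - koff y) * c y) x) (Set.Ioc 0 M) ∧
      (∫ x in Set.Ioc (0:ℝ) M, x * deriv (fun y => (Vt * kon y - koff y) * c y) x)
        = - ∫ x in Set.Ioi (0:ℝ), (Vt * kon x - koff x) * c x := by
  set g : ℝ → ℝ := fun y => (Vt * kon y - koff y) * c y with hgdef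
  have hg : ContDiffOn ℝ 1 g (Set.Ici 0) := ((contDiffOn_const.mul hkon).sub hkoff).mul hc
  have hgc : ContinuousOn g (Set.Ici 0) := hg.continuousOn
  have hdiff : ∀ x ∈ Set.Ioi (0:ℝ), DifferentiableAt ℝ g x := fun x hx =>
    (hg.contDiffAt (Ici_mem_nhds hx)).differentiableAt one_ne_zero
  set dW : ℝ → ℝ := derivWithin g (Set.Ici 0) with hdWdef
  have hdWc : ContinuousOn dW (Set.Ici 0) :=
    hg.continuousOn_derivWithin (uniqueDiffOn_Ici 0) le_rfl
  have heq : ∀ x ∈ Set.Ioi (0:ℝ), deriv g x = dW x := fun x hx =>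
    (derivWithin_of_mem_nhds (Ici_mem_nhds hx)).symm
  have hIccIci : Set.Icc (0:ℝ) M ⊆ Set.Ici 0 := fun x hx => hx.1
  have hInt : IntegrableOn (fun x => x * deriv g x) (Set.Ioc 0 M) := by
    have hcont : ContinuousOn (fun x => x * dW x) (Set.Icc 0 M) :=
      continuousOn_id.mul (hdWc.mono hIccIci)
    refine (hcont.integrableOn_Icc.mono_set Ioc_subset_Icc_self).congr_fun ?_ measurableSet_Ioc
    intro x hx
    show x * dW x = x * deriv g x
    rw [heq x hx.1]
  refine ⟨hInt, ?_⟩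
  have h' : ∀ x ∈ Set.Ioo (0:ℝ) M, HasDerivAt (fun y => y * g y) (g x + x * deriv g x) x := by
    intro x hx
    have hgx : HasDerivAt g (deriv g x) x := (hdiff x hx.1).hasDerivAt
    have := (hasDerivAt_id x).mul hgx
    simpa [Pi.mul_def] using this
  have hcont2 : ContinuousOn (fun y => y * g y) (Set.Icc 0 M) :=
    continuousOn_id.mul (hgc.mono hIccIci)
  have hiiG : IntervalIntegrable g volume 0 M := by
    rw [intervalIntegrable_iff_integrableOn_Ioc_of_le hM.le]
    exact ((hgc.mono hIccIci).integrableOn_Icc.mono_set Ioc_subset_Icc_self)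
  have hiiX : IntervalIntegrable (fun x => x * deriv g x) volume 0 M := by
    rw [intervalIntegrable_iff_integrableOn_Ioc_of_le hM.le]
    exact hInt
  have hii : IntervalIntegrable (fun x => g x + x * deriv g x) volume 0 M := hiiG.add hiiX
  have hFTC := intervalIntegral.integral_eq_sub_of_hasDeriv_right_of_le hM.le hcont2
    (fun x hx => (h' x hx).hasDerivWithinAt) hii
  have hgM : g M = 0 := by rw [hgdef]; simp [hcsupp M le_rfl]
  have hsum : (∫ x in (0:ℝ)..M, g x) + ∫ x in (0:ℝ)..M, x * deriv g x = 0 := by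
    rw [← intervalIntegral.integral_add hiiG hiiX, hFTC]
    simp [hgM]
  have htail : ∫ x in Set.Ioi (0:ℝ), (Vt * kon x - koff x) * c x = ∫ x in Set.Ioc (0:ℝ) M, g x := by
    refine tail_int hM.le (fun x hx => ?_)
      ((hgc.mono hIccIci).integrableOn_Icc.mono_set Ioc_subset_Icc_self)
    show g x = 0
    rw [hgdef]; simp [hcsupp x hx.le]
  rw [htail, ← intervalIntegral.integral_of_le hM.le, ← intervalIntegral.integral_of_le hM.le]
  linarith

lemma sq_integrable {B : ℝ} {h : ℝ × ℝ → ℝ}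
    (hh : ContinuousOn h (Set.Icc 0 B ×ˢ Set.Icc 0 B)) :
    Integrable h
      ((volume.restrict (Set.Ioc (0:ℝ) B)).prod (volume.restrict (Set.Ioc (0:ℝ) B))) := by
  have hsub : Set.Ioc (0:ℝ) B ×ˢ Set.Ioc (0:ℝ) B ⊆ Set.Icc 0 B ×ˢ Set.Icc 0 B :=
    prod_mono Ioc_subset_Icc_self Ioc_subset_Icc_self
  have hcomp : IsCompact (Set.Icc (0:ℝ) B ×ˢ Set.Icc (0:ℝ) B) := isCompact_Icc.prod isCompact_Icc
  obtain ⟨C, hC⟩ := hcomp.exists_bound_of_continuousOn hh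
  haveI : IsFiniteMeasure (volume.restrict (Set.Ioc (0:ℝ) B)) :=
    ⟨by rw [Measure.restrict_apply_univ]; exact measure_Ioc_lt_top⟩
  have hmeas : AEStronglyMeasurable h
      ((volume.restrict (Set.Ioc (0:ℝ) B)).prod (volume.restrict (Set.Ioc (0:ℝ) B))) := by
    rw [Measure.prod_restrict]
    exact (hh.mono hsub).aestronglyMeasurable (measurableSet_Ioc.prod measurableSet_Ioc)
  refine Integrable.mono' (integrable_const C) hmeas ?_
  rw [Measure.prod_restrict]
  refine (ae_restrict_iff' (measurableSet_Ioc.prod measurableSet_Ioc)).2 (ae_of_all _ ?_)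
  exact fun p hp => hC p (hsub hp)

lemma coag_part {kc : ℝ → ℝ → ℝ} {M : ℝ} {c : ℝ → ℝ} (hM : 0 < M)
    (hkc_cont : ContinuousOn (fun p : ℝ × ℝ => kc p.1 p.2) (Set.Ici 0 ×ˢ Set.Ici 0))
    (hkc_symm : ∀ x ∈ Set.Ici (0:ℝ), ∀ y ∈ Set.Ici (0:ℝ), kc x y = kc y x)
    (hc : ContinuousOn c (Set.Ici 0)) (hcsupp : ∀ x ≥ M, c x = 0)
    (hG0 : ∀ x > M, (∫ y in (0:ℝ)..x, kc y (x - y) * c y * c (x - y)) = 0) :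
    IntegrableOn (fun x => x * Qc kc c x) (Set.Ioc 0 M) ∧
      (∫ x in Set.Ioc (0:ℝ) M, x * Qc kc c x) = 0 := by
  set μM := volume.restrict (Set.Ioc (0:ℝ) M) with hμM
  set G : ℝ → ℝ := fun x => ∫ y in (0:ℝ)..x, kc y (x - y) * c y * c (x - y) with hGdef
  set f₁ : ℝ → ℝ → ℝ := fun x y => x * (kc y (x - y) * c y * c (x - y)) with hf₁def
  -- continuity of f₁ on the big triangle
  have hf₁ : ContinuousOn (fun p : ℝ × ℝ => f₁ p.1 p.2)
      {p : ℝ × ℝ | 0 ≤ p.2 ∧ p.2 ≤ p.1 ∧ p.1 ≤ 2*M} := by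
    have hkcT : ContinuousOn (fun p : ℝ × ℝ => kc p.2 (p.1 - p.2))
        {p : ℝ × ℝ | 0 ≤ p.2 ∧ p.2 ≤ p.1 ∧ p.1 ≤ 2*M} := by
      refine hkc_cont.comp
        ((continuous_snd.prodMk (continuous_fst.sub continuous_snd)).continuousOn) ?_
      intro p hp; exact ⟨hp.1, sub_nonneg.2 hp.2.1⟩
    have hc2 : ContinuousOn (fun p : ℝ × ℝ => c p.2)
        {p : ℝ × ℝ | 0 ≤ p.2 ∧ p.2 ≤ p.1 ∧ p.1 ≤ 2*M} :=
      hc.comp continuous_snd.continuousOn (fun p hp => hp.1)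
    have hc3 : ContinuousOn (fun p : ℝ × ℝ => c (p.1 - p.2))
        {p : ℝ × ℝ | 0 ≤ p.2 ∧ p.2 ≤ p.1 ∧ p.1 ≤ 2*M} :=
      hc.comp ((continuous_fst.sub continuous_snd).continuousOn)
        (fun p hp => sub_nonneg.2 hp.2.1)
    exact continuousOn_fst.mul ((hkcT.mul hc2).mul hc3)
  obtain ⟨hI1, hI2, hswap⟩ := tri_swap (by linarith : (0:ℝ) < 2*M) hf₁
  have hfun : (fun x => ∫ y in (0:ℝ)..x, f₁ x y) = fun x => x * G x := by
    funext x
    exact intervalIntegral.integral_const_mul _ _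
  rw [hfun] at hI1 hswap
  have hI1M : IntegrableOn (fun x => x * G x) (Set.Ioc 0 M) :=
    hI1.mono_set (Ioc_subset_Ioc_right (by linarith))
  -- LHS split
  have hLHS : (∫ x in Set.Ioc (0:ℝ) (2*M), x * G x) = ∫ x in Set.Ioc (0:ℝ) M, x * G x := by
    rw [show Set.Ioc (0:ℝ) (2*M) = Set.Ioc 0 M ∪ Set.Ioc M (2*M) from
        (Ioc_union_Ioc_eq_Ioc hM.le (by linarith)).symm,
      setIntegral_union (Ioc_disjoint_Ioc.2 (by simp)) measurableSet_Ioc hI1M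
        (hI1.mono_set (Ioc_subset_Ioc_left hM.le))]
    have : ∫ x in Set.Ioc M (2*M), x * G x = 0 := by
      rw [setIntegral_congr_fun measurableSet_Ioc (g := fun _ => (0:ℝ))]
      · simp
      · intro x hx
        show x * G x = 0
        rw [hGdef]
        show x * (∫ y in (0:ℝ)..x, kc y (x - y) * c y * c (x - y)) = 0
        rw [hG0 x hx.1, mul_zero]
    rw [this, add_zero]
  -- RHS: split outer and shift inner
  have hRHS : (∫ y in Set.Ioc (0:ℝ) (2*M), ∫ x in y..(2*M), f₁ x y)
      = ∫ y in Set.Ioc (0:ℝ) M, ∫ z in (0:ℝ)..M, (z + y) * (kc y z * c y * c z) := by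
    rw [show Set.Ioc (0:ℝ) (2*M) = Set.Ioc 0 M ∪ Set.Ioc M (2*M) from
        (Ioc_union_Ioc_eq_Ioc hM.le (by linarith)).symm,
      setIntegral_union (Ioc_disjoint_Ioc.2 (by simp)) measurableSet_Ioc
        (hI2.mono_set (Ioc_subset_Ioc_right (by linarith)))
        (hI2.mono_set (Ioc_subset_Ioc_left hM.le))]
    have hzero : ∫ y in Set.Ioc M (2*M), ∫ x in y..(2*M), f₁ x y = 0 := by
      rw [setIntegral_congr_fun measurableSet_Ioc (g := fun _ => (0:ℝ))]
      · simp
      · intro y hy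
        show (∫ x in y..(2*M), f₁ x y) = 0
        have : EqOn (fun x => f₁ x y) (fun _ => (0:ℝ)) (Set.uIcc y (2*M)) := by
          intro x hx
          show x * (kc y (x - y) * c y * c (x - y)) = 0
          rw [hcsupp y hy.1.le]
          ring
        rw [intervalIntegral.integral_congr this, intervalIntegral.integral_zero]
    rw [hzero, add_zero]
    refine setIntegral_congr_fun measurableSet_Ioc ?_
    intro y hy
    show (∫ x in y..(2*M), f₁ x y) = ∫ z in (0:ℝ)..M, (z + y) * (kc y z * c y * c z)
    have hyM : y ≤ M := hy.2
    have hshift := intervalIntegral.integral_comp_add_right (a := (0:ℝ)) (b := 2*M - y)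
      (fun x => f₁ x y) y
    rw [zero_add, sub_add_cancel] at hshift
    have hint : (fun z => f₁ (z + y) y) = fun z => (z + y) * (kc y z * c y * c z) := by
      funext z
      show (z + y) * (kc y (z + y - y) * c y * c (z + y - y)) = _
      rw [add_sub_cancel_right]
    rw [← hshift, hint]
    have hii1 : IntervalIntegrable (fun z => (z + y) * (kc y z * c y * c z)) volume 0 M := by
      apply ContinuousOn.intervalIntegrable
      rw [uIcc_of_le hM.le]
      refine ((continuous_id.add continuous_const).continuousOn.mul ?_)
      refine ((hkc_cont.comp ((continuous_const.prodMk continuous_id).continuousOn)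
        (fun z hz => ⟨hy.1.le, hz.1⟩)).mul continuousOn_const).mul
        (hc.comp continuous_id.continuousOn (fun z hz => hz.1))
    have hii2 : IntervalIntegrable (fun z => (z + y) * (kc y z * c y * c z)) volume M (2*M - y) := by
      apply ContinuousOn.intervalIntegrable
      rw [uIcc_of_le (by linarith : M ≤ 2*M - y)]
      refine ((continuous_id.add continuous_const).continuousOn.mul ?_)
      refine ((hkc_cont.comp ((continuous_const.prodMk continuous_id).continuousOn)
        (fun z hz => ⟨hy.1.le, le_trans hM.le hz.1⟩)).mul continuousOn_const).mul
        (hc.comp continuous_id.continuousOn (fun z hz => le_trans hM.le hz.1))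
    rw [← intervalIntegral.integral_add_adjacent_intervals hii1 hii2]
    have : ∫ z in M..(2*M - y), (z + y) * (kc y z * c y * c z) = 0 := by
      have heq : EqOn (fun z => (z + y) * (kc y z * c y * c z)) (fun _ => (0:ℝ))
          (Set.uIcc M (2*M - y)) := by
        intro z hz
        rw [uIcc_of_le (by linarith : M ≤ 2*M - y)] at hz
        show (z + y) * (kc y z * c y * c z) = 0
        rw [hcsupp z hz.1]
        ring
      rw [intervalIntegral.integral_congr heq, intervalIntegral.integral_zero]
    rw [this, add_zero]
  -- the two double integrals over the square
  have hΦg : Integrable (fun p : ℝ × ℝ => (p.2 + p.1) * (kc p.1 p.2 * c p.1 * c p.2))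
      (μM.prod μM) := by
    apply sq_integrable
    refine (continuous_snd.add continuous_fst).continuousOn.mul ?_
    refine ((hkc_cont.mono (prod_mono (fun x hx => hx.1) (fun x hx => hx.1))).mul
      (hc.comp continuous_fst.continuousOn (fun p hp => hp.1.1))).mul
      (hc.comp continuous_snd.continuousOn (fun p hp => hp.2.1))
  have hΦ1 : Integrable (fun p : ℝ × ℝ => p.1 * (kc p.1 p.2 * c p.1 * c p.2))
      (μM.prod μM) := by
    apply sq_integrable
    refine continuous_fst.continuousOn.mul ?_
    refine ((hkc_cont.mono (prod_mono (fun x hx => hx.1) (fun x hx => hx.1))).mul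
      (hc.comp continuous_fst.continuousOn (fun p hp => hp.1.1))).mul
      (hc.comp continuous_snd.continuousOn (fun p hp => hp.2.1))
  have hΦ2 : Integrable (fun p : ℝ × ℝ => p.2 * (kc p.1 p.2 * c p.1 * c p.2))
      (μM.prod μM) := by
    apply sq_integrable
    refine continuous_snd.continuousOn.mul ?_
    refine ((hkc_cont.mono (prod_mono (fun x hx => hx.1) (fun x hx => hx.1))).mul
      (hc.comp continuous_fst.continuousOn (fun p hp => hp.1.1))).mul
      (hc.comp continuous_snd.continuousOn (fun p hp => hp.2.1))
  have hΦl : Integrable (fun p : ℝ × ℝ => p.1 * (c p.1 * (kc p.1 p.2 * c p.2)))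
      (μM.prod μM) := by
    have : (fun p : ℝ × ℝ => p.1 * (c p.1 * (kc p.1 p.2 * c p.2)))
        = fun p : ℝ × ℝ => p.1 * (kc p.1 p.2 * c p.1 * c p.2) := by
      funext p; ring
    rw [this]; exact hΦ1
  -- symmetry : A2 = A1
  have hA21 : (∫ p, p.2 * (kc p.1 p.2 * c p.1 * c p.2) ∂(μM.prod μM))
      = ∫ p, p.1 * (kc p.1 p.2 * c p.1 * c p.2) ∂(μM.prod μM) := by
    have hsw := integral_prod_swap (μ := μM) (ν := μM)
      (fun p : ℝ × ℝ => p.2 * (kc p.1 p.2 * c p.1 * c p.2))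
    have : (fun p : ℝ × ℝ => (p.swap).2 * (kc (p.swap).1 (p.swap).2 * c (p.swap).1 * c (p.swap).2))
        = fun p : ℝ × ℝ => p.1 * (kc p.2 p.1 * c p.2 * c p.1) := rfl
    rw [this] at hsw
    rw [← hsw]
    rw [hμM, Measure.prod_restrict]
    refine integral_congr_ae ((ae_restrict_iff' (measurableSet_Ioc.prod measurableSet_Ioc)).2
      (ae_of_all _ ?_))
    intro p hp
    show p.1 * (kc p.2 p.1 * c p.2 * c p.1) = p.1 * (kc p.1 p.2 * c p.1 * c p.2)
    rw [hkc_symm p.2 hp.2.1.le p.1 hp.1.1.le]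
    ring
  -- gain value
  have hgain_val : (∫ x in Set.Ioc (0:ℝ) M, x * G x)
      = ∫ p, (p.2 + p.1) * (kc p.1 p.2 * c p.1 * c p.2) ∂(μM.prod μM) := by
    rw [← hLHS, hswap, hRHS]
    have : ∀ y ∈ Set.Ioc (0:ℝ) M, (∫ z in (0:ℝ)..M, (z + y) * (kc y z * c y * c z))
        = ∫ z, (z + y) * (kc y z * c y * c z) ∂μM := by
      intro y hy
      rw [intervalIntegral.integral_of_le hM.le, hμM]
    rw [setIntegral_congr_fun measurableSet_Ioc this]
    exact integral_integral hΦg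
  -- loss value and integrability
  have hLoss_int0 : Integrable (fun x => ∫ y, x * (c x * (kc x y * c y)) ∂μM) μM :=
    hΦl.integral_prod_left
  have hLoss_eq : ∀ x ∈ Set.Ioc (0:ℝ) M,
      (∫ y, x * (c x * (kc x y * c y)) ∂μM)
        = x * (c x * ∫ y in Set.Ioi (0:ℝ), kc x y * c y) := by
    intro x hx
    have htail : ∫ y in Set.Ioi (0:ℝ), kc x y * c y = ∫ y, kc x y * c y ∂μM := by
      rw [hμM]
      refine tail_int hM.le (fun y hy => ?_) ?_
      · rw [hcsupp y hy.le]; ring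
      · refine ((?_ : ContinuousOn (fun y => kc x y * c y) (Set.Icc 0 M)).integrableOn_Icc).mono_set
          Ioc_subset_Icc_self
        exact (hkc_cont.comp ((continuous_const.prodMk continuous_id).continuousOn)
          (fun y hy => ⟨hx.1.le, hy.1⟩)).mul (hc.mono (fun y hy => hy.1))
    rw [htail, integral_const_mul, integral_const_mul]
  have hLoss_int : IntegrableOn (fun x => x * (c x * ∫ y in Set.Ioi (0:ℝ), kc x y * c y))
      (Set.Ioc 0 M) := by
    refine hLoss_int0.congr ?_
    rw [hμM]
    exact (ae_restrict_iff' measurableSet_Ioc).2 (ae_of_all _ hLoss_eq)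
  have hloss_val : (∫ x in Set.Ioc (0:ℝ) M, x * (c x * ∫ y in Set.Ioi (0:ℝ), kc x y * c y))
      = ∫ p, p.1 * (c p.1 * (kc p.1 p.2 * c p.2)) ∂(μM.prod μM) := by
    have h2 : (∫ x, (∫ y, x * (c x * (kc x y * c y)) ∂μM) ∂μM)
        = ∫ p, p.1 * (c p.1 * (kc p.1 p.2 * c p.2)) ∂(μM.prod μM) :=
      integral_integral (f := fun x y => x * (c x * (kc x y * c y))) hΦl
    rw [← h2, hμM]
    exact (setIntegral_congr_fun measurableSet_Ioc (fun x hx => (hLoss_eq x hx).symm))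
  -- assemble
  have hsplit : ∀ x ∈ Set.Ioc (0:ℝ) M, x * Qc kc c x
      = (1/2) * (x * G x) - x * (c x * ∫ y in Set.Ioi (0:ℝ), kc x y * c y) := by
    intro x hx
    show x * Qc kc c x = _
    rw [Qc, hGdef]
    show x * ((1 / 2) * (∫ y in (0:ℝ)..x, kc y (x - y) * c y * c (x - y))
      - c x * ∫ y in Set.Ioi (0:ℝ), kc x y * c y) = _
    ring
  constructor
  · refine IntegrableOn.congr_fun ((hI1M.const_mul (1/2)).sub hLoss_int) ?_ measurableSet_Ioc
    intro x hx
    exact (hsplit x hx).symm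
  · rw [setIntegral_congr_fun measurableSet_Ioc hsplit,
      integral_sub (hI1M.const_mul (1/2)) hLoss_int, integral_const_mul, hgain_val, hloss_val]
    have hexp : (fun p : ℝ × ℝ => (p.2 + p.1) * (kc p.1 p.2 * c p.1 * c p.2))
        = fun p : ℝ × ℝ => p.2 * (kc p.1 p.2 * c p.1 * c p.2)
          + p.1 * (kc p.1 p.2 * c p.1 * c p.2) := by
      funext p; ring
    have hloss2 : (fun p : ℝ × ℝ => p.1 * (c p.1 * (kc p.1 p.2 * c p.2)))
        = fun p : ℝ × ℝ => p.1 * (kc p.1 p.2 * c p.1 * c p.2) := by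
      funext p; ring
    rw [hexp, integral_add hΦ2 hΦ1, hloss2, hA21]
    ring

lemma frag_part {kf : ℝ → ℝ → ℝ} {M : ℝ} {c : ℝ → ℝ} (hM : 0 < M)
    (hkf_cont : ContinuousOn (fun p : ℝ × ℝ => kf p.1 p.2) (Set.Ici 0 ×ˢ Set.Ici 0))
    (hkf_symm : ∀ x ∈ Set.Ici (0:ℝ), ∀ y ∈ Set.Ici (0:ℝ), kf x y = kf y x)
    (hc : ContinuousOn c (Set.Ici 0)) (hcsupp : ∀ x ≥ M, c x = 0) :
    IntegrableOn (fun x => x * Qf kf c x) (Set.Ioc 0 M) ∧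
      (∫ x in Set.Ioc (0:ℝ) M, x * Qf kf c x) = 0 := by
  set μM := volume.restrict (Set.Ioc (0:ℝ) M) with hμM
  set K : ℝ → ℝ := fun x => ∫ y in (0:ℝ)..x, kf y (x - y) with hKdef
  set L2 : ℝ → ℝ := fun x => ∫ y in Set.Ioi (0:ℝ), kf x y * c (x + y) with hL2def
  -- piece 1 : (1/2 x c x) * K x ; integrability via tri_swap
  set f₃ : ℝ → ℝ → ℝ := fun x y => ((1/2) * x * c x) * kf y (x - y) with hf₃def
  have hf₃ : ContinuousOn (fun p : ℝ × ℝ => f₃ p.1 p.2)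
      {p : ℝ × ℝ | 0 ≤ p.2 ∧ p.2 ≤ p.1 ∧ p.1 ≤ M} := by
    refine ContinuousOn.mul ?_ ?_
    · exact (continuousOn_const.mul continuousOn_fst).mul
        (hc.comp continuous_fst.continuousOn (fun p hp => hp.1.trans hp.2.1))
    · exact hkf_cont.comp
        ((continuous_snd.prodMk (continuous_fst.sub continuous_snd)).continuousOn)
        (fun p hp => ⟨hp.1, sub_nonneg.2 hp.2.1⟩)
  obtain ⟨hJ1, _, _⟩ := tri_swap hM hf₃
  have hfun3 : (fun x => ∫ y in (0:ℝ)..x, f₃ x y) = fun x => ((1/2) * x * c x) * K x := by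
    funext x
    exact intervalIntegral.integral_const_mul _ _
  rw [hfun3] at hJ1
  -- piece 2 : x * L2 x
  have hΨ : Integrable (fun p : ℝ × ℝ => p.1 * (kf p.1 p.2 * c (p.1 + p.2)))
      (μM.prod μM) := by
    apply sq_integrable
    refine continuous_fst.continuousOn.mul ?_
    refine ((hkf_cont.mono (prod_mono (fun x hx => hx.1) (fun x hx => hx.1))).mul
      (hc.comp (continuous_fst.add continuous_snd).continuousOn
        (fun p hp => add_nonneg hp.1.1 hp.2.1)))
  have hL2_eq : ∀ x ∈ Set.Ioc (0:ℝ) M,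
      (∫ y, x * (kf x y * c (x + y)) ∂μM) = x * L2 x := by
    intro x hx
    have htail : L2 x = ∫ y, kf x y * c (x + y) ∂μM := by
      rw [hL2def, hμM]
      refine tail_int hM.le (fun y hy => ?_) ?_
      · rw [hcsupp (x + y) (by linarith [hx.1])]; ring
      · exact (((hkf_cont.comp ((continuous_const.prodMk continuous_id).continuousOn)
          (fun y hy => ⟨hx.1.le, hy.1⟩)).mul
          (hc.comp (continuous_const.add continuous_id).continuousOn
            (fun y hy => add_nonneg hx.1.le hy.1))).integrableOn_Icc).mono_set
          Ioc_subset_Icc_self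
    rw [htail, integral_const_mul]
  have hPiece2_int : IntegrableOn (fun x => x * L2 x) (Set.Ioc 0 M) := by
    refine (hΨ.integral_prod_left).congr ?_
    rw [hμM]
    exact (ae_restrict_iff' measurableSet_Ioc).2 (ae_of_all _ hL2_eq)
  -- the J-symmetrization
  set J : ℝ → ℝ := fun z => ∫ x in (0:ℝ)..z, x * kf x (z - x) with hJdef
  have hJsym : ∀ z ∈ Set.Ioc (0:ℝ) M, J z = 1/2 * (z * K z) := by
    intro z hz
    have hz0 : (0:ℝ) ≤ z := hz.1.le
    have hii1 : IntervalIntegrable (fun x => z * kf x (z - x)) volume 0 z := by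
      apply ContinuousOn.intervalIntegrable
      rw [uIcc_of_le hz0]
      exact continuousOn_const.mul (hkf_cont.comp
        ((continuous_id.prodMk (continuous_const.sub continuous_id)).continuousOn)
        (fun x hx => ⟨hx.1, sub_nonneg.2 hx.2⟩))
    have hii2 : IntervalIntegrable (fun x => x * kf x (z - x)) volume 0 z := by
      apply ContinuousOn.intervalIntegrable
      rw [uIcc_of_le hz0]
      exact continuousOn_id.mul (hkf_cont.comp
        ((continuous_id.prodMk (continuous_const.sub continuous_id)).continuousOn)
        (fun x hx => ⟨hx.1, sub_nonneg.2 hx.2⟩))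
    have hrefl := intervalIntegral.integral_comp_sub_left (a := (0:ℝ)) (b := z)
      (fun w => w * kf w (z - w)) z
    rw [sub_self, sub_zero] at hrefl
    have hfe : (fun x => (fun w => w * kf w (z - w)) (z - x))
        = fun x => (z - x) * kf (z - x) x := by
      funext x
      show (z - x) * kf (z - x) (z - (z - x)) = (z - x) * kf (z - x) x
      rw [sub_sub_cancel]
    rw [hfe] at hrefl
    -- hrefl : ∫ x in 0..z, (z - x) * kf (z - x) x = ∫ x in 0..z, x * kf x (z - x)
    have hcongr : (∫ x in (0:ℝ)..z, (z - x) * kf (z - x) x)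
        = ∫ x in (0:ℝ)..z, (z - x) * kf x (z - x) := by
      refine intervalIntegral.integral_congr ?_
      intro x hx
      rw [uIcc_of_le hz0] at hx
      show (z - x) * kf (z - x) x = (z - x) * kf x (z - x)
      rw [hkf_symm (z - x) (sub_nonneg.2 hx.2) x hx.1]
    have hsub : (∫ x in (0:ℝ)..z, (z - x) * kf x (z - x))
        = (∫ x in (0:ℝ)..z, z * kf x (z - x)) - ∫ x in (0:ℝ)..z, x * kf x (z - x) := by
      rw [← intervalIntegral.integral_sub hii1 hii2]
      refine intervalIntegral.integral_congr ?_
      intro x _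
      show (z - x) * kf x (z - x) = z * kf x (z - x) - x * kf x (z - x)
      ring
    have hKz : (∫ x in (0:ℝ)..z, z * kf x (z - x)) = z * K z := by
      have hK' : K z = ∫ x in (0:ℝ)..z, kf x (z - x) := rfl
      rw [hK']
      exact intervalIntegral.integral_const_mul _ _
    have : J z = z * K z - J z := by
      calc J z = ∫ x in (0:ℝ)..z, x * kf x (z - x) := rfl
        _ = ∫ x in (0:ℝ)..z, (z - x) * kf (z - x) x := hrefl.symm
        _ = ∫ x in (0:ℝ)..z, (z - x) * kf x (z - x) := hcongr
        _ = (∫ x in (0:ℝ)..z, z * kf x (z - x)) - ∫ x in (0:ℝ)..z, x * kf x (z - x) := hsub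
        _ = z * K z - J z := by rw [hKz]
    linarith
  -- value of piece 2
  set f₄ : ℝ → ℝ → ℝ := fun Z X => X * (kf X (Z - X) * c Z) with hf₄def
  have hf₄ : ContinuousOn (fun p : ℝ × ℝ => f₄ p.1 p.2)
      {p : ℝ × ℝ | 0 ≤ p.2 ∧ p.2 ≤ p.1 ∧ p.1 ≤ M} := by
    refine continuousOn_snd.mul ?_
    refine (hkf_cont.comp
      ((continuous_snd.prodMk (continuous_fst.sub continuous_snd)).continuousOn)
      (fun p hp => ⟨hp.1, sub_nonneg.2 hp.2.1⟩)).mul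
      (hc.comp continuous_fst.continuousOn (fun p hp => hp.1.trans hp.2.1))
  obtain ⟨hK1, hK2, hKswap⟩ := tri_swap hM hf₄
  have hinner : ∀ x ∈ Set.Ioc (0:ℝ) M,
      (∫ y, x * (kf x y * c (x + y)) ∂μM) = ∫ z in x..M, f₄ z x := by
    intro x hx
    have h1 : (∫ y, x * (kf x y * c (x + y)) ∂μM) = ∫ y in (0:ℝ)..M, x * (kf x y * c (x + y)) := by
      rw [hμM, intervalIntegral.integral_of_le hM.le]
    have hshift := intervalIntegral.integral_comp_add_right (a := (0:ℝ)) (b := M)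
      (fun z => x * (kf x (z - x) * c z)) x
    rw [zero_add] at hshift
    have hfe : (fun y => (fun z => x * (kf x (z - x) * c z)) (y + x))
        = fun y => x * (kf x y * c (x + y)) := by
      funext y
      show x * (kf x (y + x - x) * c (y + x)) = x * (kf x y * c (x + y))
      rw [add_sub_cancel_right, add_comm y x]
    rw [hfe] at hshift
    -- hshift : ∫ y in 0..M, x * (kf x y * c (x+y)) = ∫ z in x..M + x, x * (kf x (z-x) * c z)
    have hiiA : IntervalIntegrable (fun z => x * (kf x (z - x) * c z)) volume x M := by
      apply ContinuousOn.intervalIntegrable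
      rw [uIcc_of_le hx.2]
      exact continuousOn_const.mul ((hkf_cont.comp
        ((continuous_const.prodMk (continuous_id.sub continuous_const)).continuousOn)
        (fun z hz => ⟨hx.1.le, sub_nonneg.2 hz.1⟩)).mul
        (hc.comp continuous_id.continuousOn (fun z hz => (hx.1.le.trans hz.1))))
    have hiiB : IntervalIntegrable (fun z => x * (kf x (z - x) * c z)) volume M (M + x) := by
      apply ContinuousOn.intervalIntegrable
      rw [uIcc_of_le (by linarith [hx.1] : M ≤ M + x)]
      exact continuousOn_const.mul ((hkf_cont.comp
        ((continuous_const.prodMk (continuous_id.sub continuous_const)).continuousOn)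
        (fun z hz => ⟨hx.1.le, sub_nonneg.2 (hx.2.trans hz.1)⟩)).mul
        (hc.comp continuous_id.continuousOn (fun z hz => hM.le.trans hz.1)))
    have hzeroB : (∫ z in M..(M + x), x * (kf x (z - x) * c z)) = 0 := by
      have heq : EqOn (fun z => x * (kf x (z - x) * c z)) (fun _ => (0:ℝ))
          (Set.uIcc M (M + x)) := by
        intro z hz
        rw [uIcc_of_le (by linarith [hx.1] : M ≤ M + x)] at hz
        show x * (kf x (z - x) * c z) = 0
        rw [hcsupp z hz.1]
        ring
      rw [intervalIntegral.integral_congr heq, intervalIntegral.integral_zero]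
    rw [h1, hshift, ← intervalIntegral.integral_add_adjacent_intervals hiiA hiiB, hzeroB,
      add_zero]
  -- piece 2 value via triangle swap
  have hP2val : (∫ x in Set.Ioc (0:ℝ) M, x * L2 x)
      = ∫ z in Set.Ioc (0:ℝ) M, ((1/2) * z * c z) * K z := by
    have e1 : (∫ x in Set.Ioc (0:ℝ) M, x * L2 x)
        = ∫ x in Set.Ioc (0:ℝ) M, ∫ z in x..M, f₄ z x := by
      refine setIntegral_congr_fun measurableSet_Ioc ?_
      intro x hx
      show x * L2 x = ∫ z in x..M, f₄ z x
      rw [← hL2_eq x hx, hinner x hx]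
    have e2 : (∫ x in Set.Ioc (0:ℝ) M, ∫ z in x..M, f₄ z x)
        = ∫ z in Set.Ioc (0:ℝ) M, ∫ x in (0:ℝ)..z, f₄ z x := hKswap.symm
    have e3 : ∀ z ∈ Set.Ioc (0:ℝ) M, (∫ x in (0:ℝ)..z, f₄ z x)
        = ((1/2) * z * c z) * K z := by
      intro z hz
      have hpull : (fun x => f₄ z x) = fun x => (x * kf x (z - x)) * c z := by
        funext x
        show x * (kf x (z - x) * c z) = (x * kf x (z - x)) * c z
        ring
      rw [hpull, intervalIntegral.integral_mul_const]
      have : (∫ x in (0:ℝ)..z, x * kf x (z - x)) = J z := rfl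
      rw [this, hJsym z hz]
      ring
    rw [e1, e2]
    exact setIntegral_congr_fun measurableSet_Ioc e3
  -- assemble
  have hsplit : ∀ x ∈ Set.Ioc (0:ℝ) M, x * Qf kf c x
      = ((1/2) * x * c x) * K x - x * L2 x := by
    intro x hx
    rw [Qf, hKdef, hL2def]
    show x * ((1 / 2) * c x * (∫ y in (0:ℝ)..x, kf y (x - y))
      - ∫ y in Set.Ioi (0:ℝ), kf x y * c (x + y)) = _
    ring
  constructor
  · refine IntegrableOn.congr_fun (hJ1.sub hPiece2_int) ?_ measurableSet_Ioc
    intro x hx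
    exact (hsplit x hx).symm
  · rw [setIntegral_congr_fun measurableSet_Ioc hsplit, integral_sub hJ1 hPiece2_int, hP2val]
    ring

/-- the total mass `P(t) = V(t) + ∫_0^∞ x u(x,t) dx` is conserved by the
polymerization–coagulation–fragmentation system. -/
theorem total_mass_conservation
    (kon koff : ℝ → ℝ) (kc kf : ℝ → ℝ → ℝ) (T₀ : ℝ) (hT₀ : 0 < T₀)
    (V : ℝ → ℝ) (u : ℝ → ℝ → ℝ)
    (hkon : ContDiffOn ℝ 1 kon (Set.Ici 0))
    (hkoff : ContDiffOn ℝ 1 koff (Set.Ici 0))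
    (hkc_cont : ContinuousOn (fun p : ℝ × ℝ => kc p.1 p.2) (Set.Ici 0 ×ˢ Set.Ici 0))
    (hkc_symm : ∀ x ∈ Set.Ici (0:ℝ), ∀ y ∈ Set.Ici (0:ℝ), kc x y = kc y x)
    (hkf_cont : ContinuousOn (fun p : ℝ × ℝ => kf p.1 p.2) (Set.Ici 0 ×ˢ Set.Ici 0))
    (hkf_symm : ∀ x ∈ Set.Ici (0:ℝ), ∀ y ∈ Set.Ici (0:ℝ), kf x y = kf y x)
    (hV : ContDiffOn ℝ 1 V (Set.Icc 0 T₀))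
    (hu : ContDiffOn ℝ 1 (fun p : ℝ × ℝ => u p.1 p.2) (Set.Ici 0 ×ˢ Set.Icc 0 T₀))
    (hsupp : ∃ M : ℝ, 0 < M ∧ ∀ x ≥ M, ∀ t ∈ Set.Icc (0:ℝ) T₀, u x t = 0)
    (hODE : ∀ t ∈ Set.Ioo (0:ℝ) T₀,
      HasDerivAt V (-∫ x in Set.Ioi (0:ℝ), Trate kon koff (V t) x * u x t) t)
    (hPDE : ∀ t ∈ Set.Ioo (0:ℝ) T₀, ∀ x > (0:ℝ),
      HasDerivAt (fun s => u x s)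
        (-(deriv (fun y => Trate kon koff (V t) y * u y t) x)
          + Qc kc (fun y => u y t) x - Qf kf (fun y => u y t) x) t) :
    ∀ t ∈ Set.Icc (0:ℝ) T₀,
      V t + (∫ x in Set.Ioi (0:ℝ), x * u x t)
        = V 0 + ∫ x in Set.Ioi (0:ℝ), x * u x 0 := by
  obtain ⟨M, hM, hMsupp⟩ := hsupp
  set S : Set (ℝ × ℝ) := Set.Ici 0 ×ˢ Set.Icc 0 T₀ with hSdef
  have hSD : UniqueDiffOn ℝ S := (uniqueDiffOn_Ici 0).prod (uniqueDiffOn_Icc hT₀)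
  have hWc : ContinuousOn (fderivWithin ℝ (fun p : ℝ × ℝ => u p.1 p.2) S) S :=
    hu.continuousOn_fderivWithin hSD le_rfl
  set D2 : ℝ → ℝ → ℝ :=
    fun x t => (fderivWithin ℝ (fun p : ℝ × ℝ => u p.1 p.2) S (x, t)) ((0:ℝ), (1:ℝ)) with hD2def
  have hslice : ∀ t ∈ Set.Icc (0:ℝ) T₀, ContDiffOn ℝ 1 (fun y => u y t) (Set.Ici 0) := by
    intro t ht
    exact hu.comp ((contDiff_id.prodMk contDiff_const).contDiffOn) (fun y hy => ⟨hy, ht⟩)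
  -- time-slice derivatives
  have hUder : ∀ x > (0:ℝ), ∀ t ∈ Set.Ioo (0:ℝ) T₀, HasDerivAt (fun s => u x s) (D2 x t) t := by
    intro x hx t ht
    have hnhds : S ∈ nhds (x, t) :=
      prod_mem_nhds (Ici_mem_nhds hx) (Icc_mem_nhds ht.1 ht.2)
    have hdU : DifferentiableAt ℝ (fun p : ℝ × ℝ => u p.1 p.2) (x, t) :=
      (hu.contDiffAt hnhds).differentiableAt one_ne_zero
    have hγ : HasDerivAt (fun s : ℝ => ((x : ℝ), s)) ((0 : ℝ), (1 : ℝ)) t :=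
      (hasDerivAt_const t x).prodMk (hasDerivAt_id t)
    have h := hdU.hasFDerivAt.comp_hasDerivAt t hγ
    have hfd : fderiv ℝ (fun p : ℝ × ℝ => u p.1 p.2) (x, t)
        = fderivWithin ℝ (fun p : ℝ × ℝ => u p.1 p.2) S (x, t) :=
      (fderivWithin_of_mem_nhds hnhds).symm
    rw [hfd] at h
    exact h
  haveI : IsFiniteMeasure (volume.restrict (Set.Ioc (0:ℝ) M)) :=
    ⟨by rw [Measure.restrict_apply_univ]; exact measure_Ioc_lt_top⟩
  -- derivative of the mass integral
  have hFderiv : ∀ t₀ ∈ Set.Ioo (0:ℝ) T₀,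
      HasDerivAt (fun t => ∫ x in Set.Ioc (0:ℝ) M, x * u x t)
        (∫ x in Set.Ioc (0:ℝ) M, x * D2 x t₀) t₀ := by
    intro t₀ ht₀
    set ε : ℝ := min t₀ (T₀ - t₀) / 2 with hεdef
    have hε1 : ε ≤ t₀ / 2 := by
      rw [hεdef]; have := min_le_left t₀ (T₀ - t₀); linarith
    have hε2 : ε ≤ (T₀ - t₀) / 2 := by
      rw [hεdef]; have := min_le_right t₀ (T₀ - t₀); linarith
    have hε0 : 0 < ε := by
      rw [hεdef]
      have h1 := ht₀.1; have h2 := ht₀.2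
      have : 0 < min t₀ (T₀ - t₀) := lt_min h1 (by linarith)
      linarith
    have hball : Metric.ball t₀ ε ⊆ Set.Ioo 0 T₀ := by
      intro t htb
      rw [Metric.mem_ball, Real.dist_eq] at htb
      have h := abs_lt.1 htb
      constructor <;> [linarith [ht₀.1]; linarith [ht₀.2]]
    have hKsub : Set.Icc (0:ℝ) M ×ˢ Set.Icc (t₀ - ε) (t₀ + ε) ⊆ S := by
      intro p hp
      refine ⟨hp.1.1, ⟨?_, ?_⟩⟩
      · have := hp.2.1; have := ht₀.1; linarith
      · have := hp.2.2; have := ht₀.2; linarith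
    obtain ⟨C, hC⟩ := ((isCompact_Icc.prod isCompact_Icc).exists_bound_of_continuousOn
      (hWc.mono hKsub))
    have hmain := hasDerivAt_integral_of_dominated_loc_of_deriv_le
      (F := fun (t : ℝ) (x : ℝ) => x * u x t) (F' := fun (t : ℝ) (x : ℝ) => x * D2 x t)
      (bound := fun _ => M * C) (μ := volume.restrict (Set.Ioc (0:ℝ) M)) (x₀ := t₀) (Metric.ball_mem_nhds t₀ hε0)
      ?_ ?_ ?_ ?_ ?_ ?_
    · exact hmain.2
    · filter_upwards [isOpen_Ioo.mem_nhds ht₀] with t ht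
      exact ((continuousOn_id.mul (((hslice t ⟨ht.1.le, ht.2.le⟩).continuousOn).mono
        (fun x hx => hx.1.le))).aestronglyMeasurable measurableSet_Ioc)
    · exact ((continuousOn_id.mul (((hslice t₀ ⟨ht₀.1.le, ht₀.2.le⟩).continuousOn).mono
        (fun x hx => hx.1))).integrableOn_Icc).mono_set Ioc_subset_Icc_self
    · have hcont : ContinuousOn (fun x => x * D2 x t₀) (Set.Ioc 0 M) := by
        refine continuousOn_id.mul ?_
        have h1 : ContinuousOn (fun x : ℝ =>
            fderivWithin ℝ (fun p : ℝ × ℝ => u p.1 p.2) S (x, t₀)) (Set.Ioc 0 M) :=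
          hWc.comp ((continuous_id.prodMk continuous_const).continuousOn)
            (fun x hx => ⟨hx.1.le, ⟨ht₀.1.le, ht₀.2.le⟩⟩)
        exact h1.clm_apply continuousOn_const
      exact hcont.aestronglyMeasurable measurableSet_Ioc
    · refine (ae_restrict_iff' measurableSet_Ioc).2 (ae_of_all _ ?_)
      intro x hx t htb
      rw [Metric.mem_ball, Real.dist_eq] at htb
      have habs := abs_lt.1 htb
      have hmem : ((x : ℝ), t) ∈ Set.Icc (0:ℝ) M ×ˢ Set.Icc (t₀ - ε) (t₀ + ε) :=
        ⟨⟨hx.1.le, hx.2⟩, ⟨by linarith, by linarith⟩⟩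
      have h01 : ‖((0:ℝ), (1:ℝ))‖ = 1 := by
        rw [Prod.norm_def]; simp
      have h2 : ‖D2 x t‖ ≤ C := by
        calc ‖D2 x t‖ ≤ ‖fderivWithin ℝ (fun p : ℝ × ℝ => u p.1 p.2) S (x, t)‖
              * ‖((0:ℝ), (1:ℝ))‖ :=
            ContinuousLinearMap.le_opNorm _ _
          _ = ‖fderivWithin ℝ (fun p : ℝ × ℝ => u p.1 p.2) S (x, t)‖ := by rw [h01, mul_one]
          _ ≤ C := hC (x, t) hmem
      calc ‖x * D2 x t‖ = |x| * ‖D2 x t‖ := by rw [norm_mul]; rfl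
        _ ≤ M * C := by
            refine mul_le_mul ?_ h2 (norm_nonneg _) hM.le
            rw [abs_of_pos hx.1]; exact hx.2
    · exact integrable_const _
    · refine (ae_restrict_iff' measurableSet_Ioc).2 (ae_of_all _ ?_)
      intro x hx t htb
      exact (hUder x hx.1 t (hball htb)).const_mul x
  -- zero derivative of total mass
  have hP0 : ∀ t₀ ∈ Set.Ioo (0:ℝ) T₀,
      HasDerivAt (fun t => V t + ∫ x in Set.Ioc (0:ℝ) M, x * u x t) 0 t₀ := by
    intro t₀ ht₀
    have ht₀I : t₀ ∈ Set.Icc (0:ℝ) T₀ := ⟨ht₀.1.le, ht₀.2.le⟩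
    have hcC1 : ContDiffOn ℝ 1 (fun y => u y t₀) (Set.Ici 0) := hslice t₀ ht₀I
    have hccont : ContinuousOn (fun y => u y t₀) (Set.Ici 0) := hcC1.continuousOn
    have hcs : ∀ x ≥ M, u x t₀ = 0 := fun x hx => hMsupp x hx t₀ ht₀I
    have hTr : (fun y => Trate kon koff (V t₀) y * u y t₀)
        = fun y => (V t₀ * kon y - koff y) * u y t₀ := rfl
    have hG0 : ∀ x > M, (∫ y in (0:ℝ)..x, kc y (x - y) * u y t₀ * u (x - y) t₀) = 0 := by
      intro x hx
      have hx0 : (0:ℝ) < x := hM.trans hx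
      have hd0 : HasDerivAt (fun s => u x s) 0 t₀ := by
        have hev : (fun s => u x s) =ᶠ[nhds t₀] (fun _ => 0) := by
          filter_upwards [isOpen_Ioo.mem_nhds ht₀] with s hs
          exact hMsupp x hx.le s ⟨hs.1.le, hs.2.le⟩
        exact (hasDerivAt_const t₀ (0:ℝ)).congr_of_eventuallyEq hev
      have huniq := hd0.unique (hPDE t₀ ht₀ x hx0)
      have hder0 : deriv (fun y => Trate kon koff (V t₀) y * u y t₀) x = 0 := by
        have hev : (fun y => Trate kon koff (V t₀) y * u y t₀) =ᶠ[nhds x] (fun _ => 0) := by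
          filter_upwards [isOpen_Ioi.mem_nhds hx] with y hy
          rw [hMsupp y hy.le t₀ ht₀I, mul_zero]
        rw [hev.deriv_eq, deriv_const]
      have hQf0 : Qf kf (fun y => u y t₀) x = 0 := by
        rw [Qf]
        have h1 : u x t₀ = 0 := hcs x hx.le
        have h2 : (∫ y in Set.Ioi (0:ℝ), kf x y * u (x + y) t₀) = 0 := by
          rw [setIntegral_congr_fun measurableSet_Ioi (g := fun _ => (0:ℝ))]
          · simp
          · intro y hy
            show kf x y * u (x + y) t₀ = 0
            rw [hcs (x + y) (by rw [ge_iff_le]; have := mem_Ioi.1 hy; linarith)]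
            ring
        rw [h1, h2]; ring
      have hQc' : Qc kc (fun y => u y t₀) x
          = (1/2) * ∫ y in (0:ℝ)..x, kc y (x - y) * u y t₀ * u (x - y) t₀ := by
        rw [Qc, hcs x hx.le]; ring
      rw [hder0, hQc', hQf0] at huniq
      linarith [huniq]
    obtain ⟨hTint, hTval⟩ := transport_part (Vt := V t₀) hM hkon hkoff hcC1 hcs
    obtain ⟨hCint, hCval⟩ := coag_part hM hkc_cont hkc_symm hccont hcs hG0
    obtain ⟨hFint, hFval⟩ := frag_part hM hkf_cont hkf_symm hccont hcs
    have hDW : ∀ x ∈ Set.Ioc (0:ℝ) M, D2 x t₀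
        = -(deriv (fun y => Trate kon koff (V t₀) y * u y t₀) x)
          + Qc kc (fun y => u y t₀) x - Qf kf (fun y => u y t₀) x := by
      intro x hx
      exact (hUder x hx.1 t₀ ht₀).unique (hPDE t₀ ht₀ x hx.1)
    have hFd := hFderiv t₀ ht₀
    have hval : (∫ x in Set.Ioc (0:ℝ) M, x * D2 x t₀)
        = ∫ x in Set.Ioi (0:ℝ), Trate kon koff (V t₀) x * u x t₀ := by
      have e0 : (∫ x in Set.Ioc (0:ℝ) M, x * D2 x t₀)
          = ∫ x in Set.Ioc (0:ℝ) M,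
              (-(x * deriv (fun y => (V t₀ * kon y - koff y) * u y t₀) x)
                + (x * Qc kc (fun y => u y t₀) x - x * Qf kf (fun y => u y t₀) x)) := by
        refine setIntegral_congr_fun measurableSet_Ioc ?_
        intro x hx
        show x * D2 x t₀ = _
        rw [hDW x hx, ← hTr]
        ring
      have hTneg : IntegrableOn
          (fun x => -(x * deriv (fun y => (V t₀ * kon y - koff y) * u y t₀) x))
          (Set.Ioc 0 M) := hTint.neg
      have hCF : IntegrableOn
          (fun x => x * Qc kc (fun y => u y t₀) x - x * Qf kf (fun y => u y t₀) x)
          (Set.Ioc 0 M) := hCint.sub hFint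
      have hTrI : (fun x : ℝ => Trate kon koff (V t₀) x * u x t₀)
          = fun x : ℝ => (V t₀ * kon x - koff x) * u x t₀ := rfl
      calc (∫ x in Set.Ioc (0:ℝ) M, x * D2 x t₀)
          = ∫ x in Set.Ioc (0:ℝ) M,
              (-(x * deriv (fun y => (V t₀ * kon y - koff y) * u y t₀) x)
                + (x * Qc kc (fun y => u y t₀) x - x * Qf kf (fun y => u y t₀) x)) := e0
        _ = (∫ x in Set.Ioc (0:ℝ) M,
              -(x * deriv (fun y => (V t₀ * kon y - koff y) * u y t₀) x))
            + ∫ x in Set.Ioc (0:ℝ) M,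
                (x * Qc kc (fun y => u y t₀) x - x * Qf kf (fun y => u y t₀) x) :=
          integral_add hTneg hCF
        _ = (-(∫ x in Set.Ioc (0:ℝ) M,
              x * deriv (fun y => (V t₀ * kon y - koff y) * u y t₀) x))
            + ((∫ x in Set.Ioc (0:ℝ) M, x * Qc kc (fun y => u y t₀) x)
              - ∫ x in Set.Ioc (0:ℝ) M, x * Qf kf (fun y => u y t₀) x) := by
          rw [integral_sub hCint hFint]
          congr 1
          exact integral_neg _
        _ = ∫ x in Set.Ioi (0:ℝ), Trate kon koff (V t₀) x * u x t₀ := by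
          rw [hCval, hFval, hTval, hTrI]
          ring
    have hzero : (-∫ x in Set.Ioi (0:ℝ), Trate kon koff (V t₀) x * u x t₀)
        + (∫ x in Set.Ioc (0:ℝ) M, x * D2 x t₀) = 0 := by
      rw [hval]; ring
    have hsum := (hODE t₀ ht₀).add hFd
    rw [hzero] at hsum
    exact hsum
  -- continuity of the total mass on [0, T₀]
  have hPcont : ContinuousOn (fun t => V t + ∫ x in Set.Ioc (0:ℝ) M, x * u x t)
      (Set.Icc 0 T₀) := by
    refine (hV.continuousOn).add ?_
    have hKsub : Set.Icc (0:ℝ) M ×ˢ Set.Icc (0:ℝ) T₀ ⊆ S := fun p hp => ⟨hp.1.1, hp.2⟩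
    obtain ⟨Cu, hCu⟩ := ((isCompact_Icc.prod isCompact_Icc).exists_bound_of_continuousOn
      (hu.continuousOn.mono hKsub))
    refine continuousOn_of_dominated ?_ ?_ (integrable_const (M * Cu)) ?_
    · intro t ht
      exact ((continuousOn_id.mul (((hslice t ht).continuousOn).mono
        (fun x hx => hx.1.le))).aestronglyMeasurable measurableSet_Ioc)
    · intro t ht
      refine (ae_restrict_iff' measurableSet_Ioc).2 (ae_of_all _ ?_)
      intro x hx
      have hmem : ((x : ℝ), t) ∈ Set.Icc (0:ℝ) M ×ˢ Set.Icc (0:ℝ) T₀ := ⟨⟨hx.1.le, hx.2⟩, ht⟩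
      calc ‖x * u x t‖ = |x| * ‖u x t‖ := by rw [norm_mul]; rfl
        _ ≤ M * Cu := by
            refine mul_le_mul ?_ (hCu (x, t) hmem) (norm_nonneg _) hM.le
            rw [abs_of_pos hx.1]; exact hx.2
    · refine (ae_restrict_iff' measurableSet_Ioc).2 (ae_of_all _ ?_)
      intro x hx
      exact continuousOn_const.mul (hu.continuousOn.comp
        ((continuous_const.prodMk continuous_id).continuousOn)
        (fun t ht => ⟨hx.1.le, ht⟩))
  -- constancy
  set P : ℝ → ℝ := fun t => V t + ∫ x in Set.Ioc (0:ℝ) M, x * u x t with hPdef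
  have hconst : ∀ s ∈ Set.Ioo (0:ℝ) T₀, ∀ t ∈ Set.Ioo (0:ℝ) T₀, s ≤ t → P t = P s := by
    intro s hs t ht hst
    have hIcc : Set.Icc s t ⊆ Set.Icc 0 T₀ :=
      Set.Icc_subset_Icc hs.1.le ht.2.le
    have := constant_of_has_deriv_right_zero (f := P) (a := s) (b := t)
      (hPcont.mono hIcc)
      (fun y hy => ((hP0 y ⟨lt_of_lt_of_le hs.1 hy.1, lt_trans hy.2 ht.2⟩).hasDerivWithinAt))
    exact this t ⟨hst, le_rfl⟩
  have hmm : T₀ / 2 ∈ Set.Ioo (0:ℝ) T₀ := ⟨by linarith, by linarith⟩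
  have hPm : ∀ t ∈ Set.Icc (0:ℝ) T₀, P t = P (T₀ / 2) := by
    intro t ht
    rcases eq_or_lt_of_le ht.1 with h0 | h0
    · -- t = 0 : use continuity
      rw [← h0]
      haveI : (nhdsWithin (0:ℝ) (Set.Ioo (0:ℝ) (T₀/2))).NeBot := by
        rw [nhdsWithin_Ioo_eq_nhdsGT hmm.1]
        infer_instance
      have h1 : Filter.Tendsto P (nhdsWithin 0 (Set.Ioo (0:ℝ) (T₀/2))) (nhds (P 0)) :=
        (hPcont 0 ⟨le_rfl, hT₀.le⟩).mono
          (fun s hs => ⟨hs.1.le, le_trans hs.2.le (by linarith)⟩)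
      have hev : (fun _ : ℝ => P (T₀/2)) =ᶠ[nhdsWithin 0 (Set.Ioo (0:ℝ) (T₀/2))] P :=
        eventually_nhdsWithin_of_forall
          (fun s hs => hconst s ⟨hs.1, lt_trans hs.2 hmm.2⟩ (T₀/2) hmm hs.2.le)
      have h2 : Filter.Tendsto P (nhdsWithin 0 (Set.Ioo (0:ℝ) (T₀/2))) (nhds (P (T₀/2))) :=
        Filter.Tendsto.congr' hev tendsto_const_nhds
      exact tendsto_nhds_unique h1 h2
    · rcases eq_or_lt_of_le ht.2 with h1 | h1
      · -- t = T₀ : use continuity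
        rw [h1]
        haveI : (nhdsWithin T₀ (Set.Ioo (T₀/2) T₀)).NeBot := by
          rw [nhdsWithin_Ioo_eq_nhdsLT hmm.2]
          infer_instance
        have hA : Filter.Tendsto P (nhdsWithin T₀ (Set.Ioo (T₀/2) T₀)) (nhds (P T₀)) :=
          (hPcont T₀ ⟨hT₀.le, le_rfl⟩).mono
            (fun s hs => ⟨le_trans (by linarith) hs.1.le, hs.2.le⟩)
        have hev : (fun _ : ℝ => P (T₀/2)) =ᶠ[nhdsWithin T₀ (Set.Ioo (T₀/2) T₀)] P :=
          eventually_nhdsWithin_of_forall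
            (fun s hs => (hconst (T₀/2) hmm s ⟨lt_trans hmm.1 hs.1, hs.2⟩ hs.1.le).symm)
        have hB : Filter.Tendsto P (nhdsWithin T₀ (Set.Ioo (T₀/2) T₀)) (nhds (P (T₀/2))) :=
          Filter.Tendsto.congr' hev tendsto_const_nhds
        exact tendsto_nhds_unique hA hB
      · -- interior
        rcases le_or_gt t (T₀ / 2) with h | h
        · exact (hconst t ⟨h0, h1⟩ (T₀/2) hmm h).symm
        · exact hconst (T₀/2) hmm t ⟨h0, h1⟩ h.le
  -- transfer to the Ioi integrals
  have hIoi : ∀ t ∈ Set.Icc (0:ℝ) T₀,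
      (∫ x in Set.Ioi (0:ℝ), x * u x t) = ∫ x in Set.Ioc (0:ℝ) M, x * u x t := by
    intro t ht
    refine tail_int hM.le (fun x hx => ?_) ?_
    · rw [hMsupp x hx.le t ht, mul_zero]
    · exact ((continuousOn_id.mul (((hslice t ht).continuousOn).mono
        (fun x hx => hx.1))).integrableOn_Icc).mono_set Ioc_subset_Icc_self
  intro t ht
  have h0I : (0:ℝ) ∈ Set.Icc (0:ℝ) T₀ := ⟨le_rfl, hT₀.le⟩
  rw [hIoi t ht, hIoi 0 h0I]
  have : P t = P 0 := by rw [hPm t ht, ← hPm 0 h0I]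
  exact this
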